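/- arXiv:1504.03125 — 2 statements merged into one kernel-verified Lean document; each statement's English description precedes it below -/
import Mathlib

section
/- Let A be a Dedekind domain and m a maximal ideal of A. Then there exists an element g in A with g not in m such that the extension of m to the localization A_g = A[1/g] is a principal ideal. -/
theorem dedekind_maximal_locally_principal (A : Type*) [CommRing A] [IsDomain A]
    [IsDedekindDomain A] (m : Ideal A) (hm : m.IsMaximal) :
    ∃ g : A, g ∉ m ∧
      (m.map (algebraMap A (Localization.Away g))).IsPrincipal := by
  by_cases hbot : m = ⊥
  · refine ⟨1, ?_, ?_⟩
    · exact (Ideal.ne_top_iff_one m).mp hm.ne_top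
    · rw [hbot, Ideal.map_bot]
      exact ⟨⟨0, (Ideal.span_zero).symm⟩⟩
  · obtain ⟨a, ham, ham2⟩ : ∃ a ∈ m, a ∉ m ^ 2 :=
      SetLike.exists_of_lt (Ideal.pow_lt_self m hbot hm.ne_top 2 le_rfl)
    have hdvd : m ∣ Ideal.span {a} :=
      Ideal.dvd_iff_le.mpr (Ideal.span_le.mpr (Set.singleton_subset_iff.mpr ham))
    obtain ⟨J, hJ⟩ := hdvd
    have hJm : ¬ J ≤ m := by
      intro h
      apply ham2
      have h2 : Ideal.span {a} ≤ m ^ 2 := by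
        rw [hJ, pow_two]; exact Ideal.mul_mono le_rfl h
      exact h2 (Ideal.mem_span_singleton_self a)
    obtain ⟨g, hgJ, hgm⟩ := SetLike.not_le_iff_exists.mp hJm
    refine ⟨g, hgm, ⟨algebraMap A (Localization.Away g) a, ?_⟩⟩
    rw [Ideal.submodule_span_eq]
    apply le_antisymm
    · rw [Ideal.map_le_iff_le_comap]
      intro x hx
      have hxg : x * g ∈ Ideal.span {a} := by
        rw [hJ]; exact Ideal.mul_mem_mul hx hgJ
      obtain ⟨c, hc⟩ := Ideal.mem_span_singleton'.mp hxg
      have hgu : IsUnit (algebraMap A (Localization.Away g) g) :=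
        IsLocalization.map_units _ (⟨g, 1, pow_one g⟩ : Submonoid.powers g)
      obtain ⟨u, hu⟩ := hgu
      have key : algebraMap A (Localization.Away g) x
          = (algebraMap A (Localization.Away g) c * ↑u⁻¹) *
            algebraMap A (Localization.Away g) a := by
        have h1 : algebraMap A (Localization.Away g) c *
            algebraMap A (Localization.Away g) a
            = algebraMap A (Localization.Away g) x * ↑u := by
          rw [hu, ← map_mul, ← map_mul, hc]
        calc algebraMap A (Localization.Away g) x
            = algebraMap A (Localization.Away g) x * ↑u * ↑u⁻¹ := by
              rw [mul_assoc, u.mul_inv, mul_one]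
          _ = algebraMap A (Localization.Away g) c *
              algebraMap A (Localization.Away g) a * ↑u⁻¹ := by rw [h1]
          _ = _ := by ring
      show algebraMap A (Localization.Away g) x ∈
        Ideal.span {algebraMap A (Localization.Away g) a}
      rw [key]
      exact Ideal.mem_span_singleton'.mpr ⟨_, rfl⟩
    · rw [Ideal.span_singleton_le_iff_mem]
      exact Ideal.mem_map_of_mem _ ham
end

section
/- Let A be a Dedekind domain, a a unit of A, and m a maximal ideal of the polynomial ring A[t] containing t - a. Then there exists g ∈ A such that the principal ideal p = (g a⁻¹ t - 1) of A[t] satisfies: (1) p ⊆ m; (2) p + (t) = A[t]; and (3) the ideal m/p of A[t]/p is principal. -/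
open Polynomial Finset

lemma aux_dedekind (A : Type*) [CommRing A] [IsDomain A] [IsDedekindDomain A]
    (q : Ideal A) (hq : q.IsPrime) :
    ∃ x g : A, x ∈ q ∧ g - 1 ∈ q ∧ ∀ y ∈ q, g * y ∈ Ideal.span {x} := by
  by_cases hbot : q = ⊥
  · refine ⟨0, 1, by simp [hbot], by simp, ?_⟩
    intro y hy
    simp [hbot] at hy
    simp [hy]
  · have hqm : q.IsMaximal := hq.isMaximal hbot
    have hlt : q ^ 2 < q := Ideal.pow_lt_self q hbot hqm.ne_top 2 le_rfl
    obtain ⟨x, hxq, hxq2⟩ : ∃ x, x ∈ q ∧ x ∉ q ^ 2 := Set.exists_of_ssubset hlt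
    have hle : Ideal.span {x} ≤ q := by
      rwa [Ideal.span_le, Set.singleton_subset_iff]
    obtain ⟨c, hc⟩ : q ∣ Ideal.span {x} := Ideal.dvd_iff_le.mpr hle
    have hsup : c ⊔ q = ⊤ := by
      by_contra h
      have hcq : c ≤ q := by
        have := hqm.eq_of_le h le_sup_right
        rw [this]; exact le_sup_left
      have : Ideal.span {x} ≤ q ^ 2 := by
        rw [hc, pow_two]
        exact Ideal.mul_mono le_rfl hcq
      exact hxq2 (this (Ideal.mem_span_singleton_self x))
    obtain ⟨g, hg, r, hr, hgr⟩ := Submodule.mem_sup.mp (hsup ▸ (Submodule.mem_top : (1:A) ∈ ⊤))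
    refine ⟨x, g, hxq, ?_, ?_⟩
    · have : g - 1 = -r := by rw [← hgr]; ring
      rw [this]; exact q.neg_mem hr
    · intro y hy
      have : y * g ∈ q * c := Ideal.mul_mem_mul hy hg
      rwa [← hc, mul_comm] at this

lemma poly_key {A : Type*} [CommRing A] (g aa : A) (f : A[X]) :
    C g ^ f.natDegree * f -
      C (∑ i ∈ range (f.natDegree + 1), f.coeff i * aa ^ i * g ^ (f.natDegree - i)) ∈
      Ideal.span {C g * X - C aa} := by
  set d := f.natDegree with hd
  have h1 : C g ^ d * f = ∑ i ∈ range (d + 1), C g ^ d * (C (f.coeff i) * X ^ i) := by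
    rw [← Finset.mul_sum, ← as_sum_range_C_mul_X_pow]
  rw [h1, map_sum, ← Finset.sum_sub_distrib]
  apply Ideal.sum_mem
  intro i hi
  have hid : i ≤ d := Nat.lt_succ_iff.mp (Finset.mem_range.mp hi)
  have hgg : (C g : A[X]) ^ (d - i) * (C g) ^ i = (C g) ^ d := by
    rw [← pow_add, Nat.sub_add_cancel hid]
  have heq : C g ^ d * (C (f.coeff i) * X ^ i) - C (f.coeff i * aa ^ i * g ^ (d - i))
      = (C (f.coeff i) * C g ^ (d - i)) * ((C g * X) ^ i - (C aa) ^ i) := by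
    rw [map_mul, map_mul, map_pow, map_pow, ← hgg]
    ring
  rw [heq, Ideal.mem_span_singleton]
  exact Dvd.dvd.mul_left (sub_dvd_pow_sub_pow _ _ i) _

set_option maxHeartbeats 1000000 in
theorem exists_principal_prime_inside_maximal (A : Type*) [CommRing A] [IsDomain A]
    [IsDedekindDomain A] (a : Aˣ) (m : Ideal A[X]) (hm : m.IsMaximal)
    (ha : X - C (a : A) ∈ m) :
    ∃ g : A,
      Ideal.span {C g * C ((a⁻¹ : Aˣ) : A) * X - 1} ≤ m ∧
      Ideal.span {C g * C ((a⁻¹ : Aˣ) : A) * X - 1} ⊔ Ideal.span {(X : A[X])} = ⊤ ∧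
      (m.map (Ideal.Quotient.mk (Ideal.span {C g * C ((a⁻¹ : Aˣ) : A) * X - 1}))).IsPrincipal := by
  set ai : A := ((a⁻¹ : Aˣ) : A) with hai
  have h1 : ai * (a : A) = 1 := Units.inv_mul a
  have h2 : (C ai : A[X]) * C (a : A) = 1 := by rw [← C_mul, h1, C_1]
  set q : Ideal A := m.comap (C : A →+* A[X]) with hqdef
  have hq : q.IsPrime := by
    have := hm.isPrime
    exact Ideal.IsPrime.comap _
  have hmem : ∀ f : A[X], f ∈ m → f.eval (a : A) ∈ q := by
    intro f hf
    obtain ⟨k, hk⟩ := X_sub_C_dvd_sub_C_eval (a := (a : A)) (p := f)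
    have h3 : f - C (f.eval (a : A)) ∈ m := hk ▸ Ideal.mul_mem_right _ _ ha
    have h4 : C (f.eval (a : A)) ∈ m := by
      have := m.sub_mem hf h3
      simpa using this
    exact h4
  obtain ⟨x, g, hxq, hgq, hxg⟩ := aux_dedekind A q hq
  refine ⟨g, ?_, ?_, ?_⟩
  · -- p ≤ m
    rw [Ideal.span_le, Set.singleton_subset_iff]
    have keyeq : C g * C ai * X - 1 = C g * C ai * (X - C (a : A)) + C (g - 1) := by
      rw [map_sub, map_one]
      linear_combination (C g : A[X]) * h2
    rw [keyeq]
    exact m.add_mem (m.mul_mem_left _ ha) hgq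
  · -- comaximal with (X)
    rw [Ideal.eq_top_iff_one]
    apply Submodule.mem_sup.mpr
    refine ⟨-(C g * C ai * X - 1), neg_mem (Ideal.subset_span rfl),
      C g * C ai * X, Ideal.mul_mem_left _ _ (Ideal.mem_span_singleton_self X), by ring⟩
  · -- principal quotient
    set P : Ideal A[X] := Ideal.span {C g * C ai * X - 1} with hPdef
    set π := Ideal.Quotient.mk P with hπ
    have hle1 : m.map π ≤ Ideal.span {π (C x)} := by
      rw [Ideal.map_le_iff_le_comap]
      intro f hf
      show π f ∈ Ideal.span {π (C x)}
      have hgen : (C g * C ai * X - 1 : A[X]) ∈ P := Ideal.subset_span rfl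
      have hu : π (C g) * π (C ai * X) = 1 := by
        rw [← map_mul, ← map_one π, Ideal.Quotient.mk_eq_mk_iff_sub_mem]
        have h5 : C g * (C ai * X) - 1 = C g * C ai * X - 1 := by ring
        rw [h5]; exact hgen
      set d := f.natDegree with hd
      set e : A := ∑ i ∈ range (d + 1), f.coeff i * (a : A) ^ i * g ^ (d - i) with he
      have heq2 : π (C g) ^ d * π f = π (C e) := by
        have hsub : C g ^ d * f - C e ∈ P := by
          have hsp : Ideal.span {C g * X - C (a : A)} ≤ P := by
            rw [Ideal.span_le, Set.singleton_subset_iff]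
            have : (C g * X - C (a : A) : A[X]) = C (a : A) * (C g * C ai * X - 1) := by
              linear_combination -(C g * X : A[X]) * h2
            rw [this]
            exact Ideal.mul_mem_left _ _ hgen
          exact hsp (poly_key g (a : A) f)
        rw [← map_pow, ← map_mul, Ideal.Quotient.mk_eq_mk_iff_sub_mem]
        exact hsub
      have heval : f.eval (a : A) ∈ q := hmem f hf
      have heq : e ∈ q := by
        have hsum : e - f.eval (a : A)
            = ∑ i ∈ range (d + 1), f.coeff i * (a : A) ^ i * (g ^ (d - i) - 1) := by
          rw [eval_eq_sum_range, he]
          rw [← Finset.sum_sub_distrib]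
          apply Finset.sum_congr rfl
          intro i _
          ring
        have hmemsum : e - f.eval (a : A) ∈ q := by
          rw [hsum]
          apply Ideal.sum_mem
          intro i _
          apply Ideal.mul_mem_left
          obtain ⟨k, hk⟩ := sub_dvd_pow_sub_pow g 1 (d - i)
          rw [show g ^ (d - i) - 1 = g ^ (d - i) - 1 ^ (d - i) by rw [one_pow], hk]
          exact Ideal.mul_mem_right _ _ hgq
        have := q.add_mem hmemsum heval
        simpa using this
      obtain ⟨r, hr⟩ : x ∣ g * e := Ideal.mem_span_singleton.mp (hxg e heq)
      have hfin : π f = π (C ai * X) ^ (d + 1) * (π (C x) * π (C r)) := by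
        calc π f = (π (C g) * π (C ai * X)) ^ (d + 1) * π f := by rw [hu, one_pow, one_mul]
          _ = π (C ai * X) ^ (d + 1) * (π (C g) * (π (C g) ^ d * π f)) := by ring
          _ = π (C ai * X) ^ (d + 1) * (π (C g) * π (C e)) := by rw [heq2]
          _ = π (C ai * X) ^ (d + 1) * (π (C x) * π (C r)) := by
              rw [← map_mul, ← C_mul, hr, C_mul, map_mul π (C x) (C r)]
      rw [hfin]
      exact Ideal.mul_mem_left _ _ (Ideal.mul_mem_right _ _ (Ideal.mem_span_singleton_self _))
    have hle2 : Ideal.span {π (C x)} ≤ m.map π := by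
      rw [Ideal.span_le, Set.singleton_subset_iff]
      exact Ideal.mem_map_of_mem _ (hxq : C x ∈ m)
    exact ⟨⟨π (C x), le_antisymm hle1 hle2⟩⟩
end
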